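/- Let S(sp_{2N}) be the symmetric algebra on the symplectic Lie algebra with basis {f^{ab} = f^{ba}}. Let J be the ideal of S(sp_{2N}) generated by all elements Σ_{σ} f^{σ(a)σ(b)} f^{σ(c)σ(d)} (sum over all permutations of the four indices a,b,c,d, i.e., the complete symmetrization of f^{ab}f^{cd} in the four indices), for all 1 ≤ a,b,c,d ≤ 2N. Then in S(sp_{2N})/J every generator f^{ab} is nilpotent; specifically (f^{aa})² ∈ J and (f^{ab})⁴ ∈ J for all a,b. Consequently S(sp_{2N})/J is finite dimensional. -/

import Mathlib

open scoped BigOperators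

noncomputable section

namespace SymSp

variable (k : Type*) [Field k] [CharZero k] (N : ℕ)

/-- The symmetric algebra `S(sp_{2N})`, modeled as the polynomial ring in the variables
`f^{ab} = f^{ba}`, `1 ≤ a ≤ b ≤ 2N`. -/
abbrev SSp := MvPolynomial (Sym2 (Fin (2 * N))) k

/-- The generator `f^{ab} = f^{ba}`. -/
def f (a b : Fin (2 * N)) : SSp k N := MvPolynomial.X s(a, b)

/-- The ideal generated by the complete symmetrizations
`Σ_σ f^{σ(a)σ(b)} f^{σ(c)σ(d)}` over all permutations of the four indices `a,b,c,d`. -/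
def J : Ideal (SSp k N) :=
  Ideal.span
    { g | ∃ a b c d : Fin (2 * N),
        g = ∑ σ : Equiv.Perm (Fin 4),
          f k N (![a, b, c, d] (σ 0)) (![a, b, c, d] (σ 1)) *
          f k N (![a, b, c, d] (σ 2)) (![a, b, c, d] (σ 3)) }

end SymSp


namespace SymSp

variable {k : Type*} [Field k] [CharZero k] {N : ℕ}

open MvPolynomial

lemma f_comm (a b : Fin (2 * N)) : f k N a b = f k N b a := by
  unfold f; rw [Sym2.eq_swap]

lemma gen_mem (a b c d : Fin (2 * N)) :
    (∑ σ : Equiv.Perm (Fin 4),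
        f k N (![a, b, c, d] (σ 0)) (![a, b, c, d] (σ 1)) *
        f k N (![a, b, c, d] (σ 2)) (![a, b, c, d] (σ 3))) ∈ J k N :=
  Ideal.subset_span ⟨a, b, c, d, rfl⟩

lemma perm_sum_expand {R : Type*} [AddCommMonoid R] (F : Fin 4 → Fin 4 → Fin 4 → Fin 4 → R) :
    (∑ σ : Equiv.Perm (Fin 4), F (σ 0) (σ 1) (σ 2) (σ 3)) =
      F 0 1 2 3 + F 0 1 3 2 + (F 0 2 1 3 + F 0 2 3 1 + (F 0 3 2 1 + F 0 3 1 2)) +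
      (F 1 0 2 3 + F 1 0 3 2 + (F 1 2 0 3 + F 1 2 3 0 + (F 1 3 2 0 + F 1 3 0 2)) +
        (F 2 1 0 3 + F 2 1 3 0 + (F 2 0 1 3 + F 2 0 3 1 + (F 2 3 0 1 + F 2 3 1 0)) +
          (F 3 1 2 0 + F 3 1 0 2 + (F 3 2 1 0 + F 3 2 0 1 + (F 3 0 2 1 + F 3 0 1 2))))) := by
  rw [← Equiv.sum_comp (Equiv.Perm.decomposeFin (n := 3)).symm, Fintype.sum_prod_type]
  simp only [← Equiv.sum_comp (Equiv.Perm.decomposeFin (n := 2)).symm, Fintype.sum_prod_type]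
  simp only [← Equiv.sum_comp (Equiv.Perm.decomposeFin (n := 1)).symm, Fintype.sum_prod_type]
  simp only [show (2 : Fin 4) = Fin.succ 1 from rfl, show (3 : Fin 4) = Fin.succ 2 from rfl,
    show (1 : Fin 3) = Fin.succ 0 from rfl, show (2 : Fin 3) = Fin.succ 1 from rfl,
    Equiv.Perm.decomposeFin_symm_apply_zero, Equiv.Perm.decomposeFin_symm_apply_one,
    Equiv.Perm.decomposeFin_symm_apply_succ]
  simp only [Finset.univ_unique, Finset.sum_singleton, Fin.sum_univ_succ, Fin.sum_univ_zero]
  norm_num [Equiv.swap_apply_def, Fin.ext_iff, Fin.succAbove,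
    show Fin.succ 2 = (3 : Fin 4) from rfl]

lemma sum_aaaa (a : Fin (2 * N)) :
    (∑ σ : Equiv.Perm (Fin 4),
        f k N (![a, a, a, a] (σ 0)) (![a, a, a, a] (σ 1)) *
        f k N (![a, a, a, a] (σ 2)) (![a, a, a, a] (σ 3)))
      = 24 * f k N a a ^ 2 := by
  rw [perm_sum_expand (fun i j l m => f k N (![a, a, a, a] i) (![a, a, a, a] j) *
      f k N (![a, a, a, a] l) (![a, a, a, a] m))]
  simp only [show ![a, a, a, a] 0 = a from rfl, show ![a, a, a, a] 1 = a from rfl,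
    show ![a, a, a, a] 2 = a from rfl, show ![a, a, a, a] 3 = a from rfl]
  ring

lemma sum_aabb (a b : Fin (2 * N)) :
    (∑ σ : Equiv.Perm (Fin 4),
        f k N (![a, a, b, b] (σ 0)) (![a, a, b, b] (σ 1)) *
        f k N (![a, a, b, b] (σ 2)) (![a, a, b, b] (σ 3)))
      = 8 * (f k N a a * f k N b b) + 16 * f k N a b ^ 2 := by
  rw [perm_sum_expand (fun i j l m => f k N (![a, a, b, b] i) (![a, a, b, b] j) *
      f k N (![a, a, b, b] l) (![a, a, b, b] m))]
  simp only [show ![a, a, b, b] 0 = a from rfl, show ![a, a, b, b] 1 = a from rfl,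
    show ![a, a, b, b] 2 = b from rfl, show ![a, a, b, b] 3 = b from rfl,
    show f k N b a = f k N a b from (f_comm b a)]
  ring

lemma faa_sq_mem (a : Fin (2 * N)) : f k N a a ^ 2 ∈ J k N := by
  have hg := gen_mem (k := k) a a a a
  rw [sum_aaaa] at hg
  have hone : (C ((24 : k)⁻¹) : SSp k N) * 24 = 1 := by
    rw [show ((24 : SSp k N)) = C (24 : k) from (map_ofNat (C : k →+* SSp k N) 24).symm,
      ← C_mul, inv_mul_cancel₀ (by norm_num : (24 : k) ≠ 0), C_1]
  have key : f k N a a ^ 2 = C ((24 : k)⁻¹) * (24 * f k N a a ^ 2) := by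
    linear_combination (-(f k N a a ^ 2)) * hone
  rw [key]
  exact Ideal.mul_mem_left _ _ hg

lemma fab_pow_mem (a b : Fin (2 * N)) : f k N a b ^ 4 ∈ J k N := by
  have hg := gen_mem (k := k) a a b b
  rw [sum_aabb] at hg
  set S : SSp k N := 8 * (f k N a a * f k N b b) + 16 * f k N a b ^ 2 with hS
  have hone : (C ((256 : k)⁻¹) : SSp k N) * 256 = 1 := by
    rw [show ((256 : SSp k N)) = C (256 : k) from (map_ofNat (C : k →+* SSp k N) 256).symm,
      ← C_mul, inv_mul_cancel₀ (by norm_num : (256 : k) ≠ 0), C_1]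
  have key : f k N a b ^ 4 =
      C ((256 : k)⁻¹) * (S * (S - 16 * (f k N a a * f k N b b))) +
      (C ((256 : k)⁻¹) * 64 * f k N b b ^ 2) * f k N a a ^ 2 := by
    rw [hS]
    linear_combination (-(f k N a b ^ 4)) * hone
  rw [key]
  exact Ideal.add_mem _
    (Ideal.mul_mem_left _ _ (Ideal.mul_mem_right _ _ hg))
    (Ideal.mul_mem_left _ _ (faa_sq_mem a))

lemma X_pow_mem (s : Sym2 (Fin (2 * N))) : (X s : SSp k N) ^ 4 ∈ J k N := by
  induction s using Sym2.ind with
  | _ a b => exact fab_pow_mem a b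

lemma monomial_mem (d : Sym2 (Fin (2 * N)) →₀ ℕ) (c : k) (s : Sym2 (Fin (2 * N)))
    (h4 : 4 ≤ d s) : (monomial d c : SSp k N) ∈ J k N := by
  have heq : (monomial d c : SSp k N)
      = X s ^ 4 * (X s ^ (d s - 4) * monomial (d.erase s) c) := by
    rw [← mul_assoc, ← pow_add, show 4 + (d s - 4) = d s from by omega,
      ← monomial_single_add, Finsupp.single_add_erase]
  rw [heq]
  exact Ideal.mul_mem_right _ _ (X_pow_mem s)

lemma fd : FiniteDimensional k (SSp k N ⧸ J k N) := by
  classical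
  set S : Set (SSp k N ⧸ J k N) :=
    Set.range (fun g : Sym2 (Fin (2 * N)) → Fin 4 =>
      Ideal.Quotient.mk (J k N) (∏ s : Sym2 (Fin (2 * N)), X s ^ (g s : ℕ))) with hSdef
  have hfin : S.Finite := Set.finite_range _
  have hspan : Submodule.span k S = ⊤ := by
    rw [Submodule.eq_top_iff']
    intro x
    obtain ⟨p, rfl⟩ := Ideal.Quotient.mk_surjective x
    induction p using MvPolynomial.induction_on' with
    | add p q hp hq =>
        rw [RingHom.map_add]
        exact Submodule.add_mem _ hp hq
    | monomial d c =>
        by_cases hd : ∀ s, d s ≤ 3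
        · have hm : (monomial d c : SSp k N) = c • (monomial d (1 : k)) := by
            rw [smul_monomial, smul_eq_mul, mul_one]
          have hm2 : (monomial d (1 : k) : SSp k N)
              = ∏ s : Sym2 (Fin (2 * N)), X s ^ d s := by
            rw [monomial_eq, C_1, one_mul]
            exact Finsupp.prod_fintype _ _ (fun s => pow_zero _)
          set g : Sym2 (Fin (2 * N)) → Fin 4 := fun s => ⟨d s, by have := hd s; omega⟩
            with hgdef
          rw [hm, hm2, ← Ideal.Quotient.mkₐ_eq_mk k, map_smul]
          refine Submodule.smul_mem _ _ (Submodule.subset_span ?_)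
          exact ⟨g, by rw [Ideal.Quotient.mkₐ_eq_mk]⟩
        · push_neg at hd
          obtain ⟨s, hs⟩ := hd
          rw [Ideal.Quotient.eq_zero_iff_mem.mpr (monomial_mem d c s (by omega))]
          exact Submodule.zero_mem _
  exact ⟨Submodule.fg_def.mpr ⟨S, hfin, hspan⟩⟩


end SymSp

/-- Let `S(sp_{2N})` be the symmetric algebra on the symplectic Lie algebra
with basis `{f^{ab} = f^{ba}}`, and let `J` be the ideal generated by the complete
symmetrizations of `f^{ab} f^{cd}` in the four indices.  Then in `S(sp_{2N})/J` every
generator `f^{ab}` is nilpotent; specifically `(f^{aa})² ∈ J` and `(f^{ab})⁴ ∈ J` for all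
`a, b`.  Consequently `S(sp_{2N})/J` is finite dimensional. -/

theorem symmetric_algebra_quotient_finite (k : Type*) [Field k] [CharZero k] (N : ℕ) :
    (∀ a : Fin (2 * N), (SymSp.f k N a a) ^ 2 ∈ SymSp.J k N) ∧
    (∀ a b : Fin (2 * N), (SymSp.f k N a b) ^ 4 ∈ SymSp.J k N) ∧
    FiniteDimensional k (SymSp.SSp k N ⧸ SymSp.J k N) := by
  exact ⟨fun a => SymSp.faa_sq_mem a, fun a b => SymSp.fab_pow_mem a b, SymSp.fd⟩
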